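/- arXiv:1907.06109 — 3 statements merged into one kernel-verified Lean document; each statement's English description precedes it below -/
import Mathlib

section
/- Membrane energy of the regularized cone: Let α ∈ (0, π/2), h ∈ (0,1), and define on the sector S: u(x) = ½(arg(x) x⊥ − x) and v_h(x) = |x| if |x| ≥ h, v_h(x) = |x|²/(2h) + h/2 if |x| < h. Then ∫_S |∇u + ∇uᵀ + ∇v_h ⊗ ∇v_h|² dx ≤ 2α h², where |·| is the Frobenius norm. -/
open MeasureTheory Real Set Matrix
open scoped RealInnerProductSpace

noncomputable section

/-- The plane `ℝ²` with the Euclidean norm. -/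
abbrev E2 : Type := EuclideanSpace ℝ (Fin 2)

/-- The vector `(a, b) ∈ ℝ²`. -/
def vec2 (a b : ℝ) : E2 := (EuclideanSpace.equiv (Fin 2) ℝ).symm ![a, b]

/-- The polar angle of `x`, valued in `(−π, π]`. -/
def eArg (x : E2) : ℝ := Complex.arg ⟨x 0, x 1⟩

/-- The rotation of `x` by `π/2`: `x^⊥ = (−x₂, x₁)`. -/
def perp (x : E2) : E2 := vec2 (-(x 1)) (x 0)

/-- The `i`-th partial derivative. -/
def pd (i : Fin 2) (f : E2 → ℝ) (x : E2) : ℝ := fderiv ℝ f x (EuclideanSpace.single i 1)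

/-- The gradient, as a vector in `ℝ²`. -/
def grad2 (f : E2 → ℝ) (x : E2) : E2 := vec2 (pd 0 f x) (pd 1 f x)

/-- The Hessian matrix `(∂ᵢ∂ⱼ f)`. -/
def hess (f : E2 → ℝ) (x : E2) : Matrix (Fin 2) (Fin 2) ℝ :=
  Matrix.of fun i j => pd i (pd j f) x

/-- The Jacobian matrix `(∂ⱼ uᵢ)` of a map `u : ℝ² → ℝ²`. -/
def jac (u : E2 → E2) (x : E2) : Matrix (Fin 2) (Fin 2) ℝ :=
  Matrix.of fun i j => fderiv ℝ u x (EuclideanSpace.single j 1) i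

/-- The outer product `a ⊗ b` of two vectors in `ℝ²`. -/
def outo (a b : E2) : Matrix (Fin 2) (Fin 2) ℝ := Matrix.of fun i j => a i * b j

/-- The squared Frobenius norm of a `2 × 2` matrix. -/
def frob2 (M : Matrix (Fin 2) (Fin 2) ℝ) : ℝ := ∑ i, ∑ j, (M i j) ^ 2

/-- The membrane strain `∇u + ∇uᵀ + ∇v ⊗ ∇v`. -/
def strain (u : E2 → E2) (v : E2 → ℝ) (x : E2) : Matrix (Fin 2) (Fin 2) ℝ :=
  jac u x + (jac u x)ᵀ + outo (grad2 v x) (grad2 v x)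

/-- The open sector `S` of opening angle `2α` inside the unit disc. -/
def sector (α : ℝ) : Set E2 :=
  {x | ∃ r φ : ℝ, 0 < r ∧ r < 1 ∧ -α < φ ∧ φ < α ∧ x = r • vec2 (Real.cos φ) (Real.sin φ)}

/-- The curved part `Γ` of the boundary of the sector. -/
def GammaS (α : ℝ) : Set E2 := closure (sector α) ∩ Metric.sphere (0 : E2) 1

/-- The scaled sector `2S`. -/
def twoS (α : ℝ) : Set E2 := (fun x : E2 => (2 : ℝ) • x) '' sector α

/-- The in-plane displacement `u₀(x) = ½ (arg x · x^⊥ − x)` of the conical deformation. -/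
def coneU (x : E2) : E2 := (2⁻¹ : ℝ) • (eArg x • perp x - x)

/-- The Föppl–von-Kármán energy `E_h(u,v)`. -/
def FvK (α h : ℝ) (u : E2 → E2) (v : E2 → ℝ) : ℝ :=
  ∫ x in sector α, (frob2 (strain u v x) + h ^ 2 * frob2 (hess v x))

/-- The admissible class `𝒜`: `u ∈ W^{1,2}(S;ℝ²)`, `v ∈ W^{2,2}(S)` convex, with the
boundary conditions `v = 1`, `∇v(x) = x`, `u(x) = ½(arg x · x^⊥ − x)` on `Γ`. -/
structure Admissible (α : ℝ) (u : E2 → E2) (v : E2 → ℝ) : Prop where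
  u_aediff : ∀ᵐ x ∂(volume.restrict (sector α)), DifferentiableAt ℝ u x
  u_L2 : IntegrableOn (fun x => ‖u x‖ ^ 2) (sector α)
  uD_L2 : IntegrableOn (fun x => frob2 (jac u x)) (sector α)
  v_convex : ConvexOn ℝ (sector α) v
  v_aediff : ∀ᵐ x ∂(volume.restrict (sector α)),
      DifferentiableAt ℝ v x ∧ ∀ i, DifferentiableAt ℝ (pd i v) x
  v_L2 : IntegrableOn (fun x => (v x) ^ 2) (sector α)
  vD_L2 : IntegrableOn (fun x => ‖grad2 v x‖ ^ 2) (sector α)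
  vD2_L2 : IntegrableOn (fun x => frob2 (hess v x)) (sector α)
  bc_v : ∀ x ∈ GammaS α, v x = 1
  bc_dv : ∀ x ∈ GammaS α, grad2 v x = x
  bc_u : ∀ x ∈ GammaS α, u x = coneU x

/-- The regularized cone `v_h(x) = |x|` for `|x| ≥ h`, `v_h(x) = |x|²/(2h) + h/2` for `|x| < h`. -/
def vh (h : ℝ) (x : E2) : ℝ := if ‖x‖ < h then ‖x‖ ^ 2 / (2 * h) + h / 2 else ‖x‖

namespace MembraneAux

lemma E2_ext {x y : E2} (h0 : x 0 = y 0) (h1 : x 1 = y 1) : x = y := by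
  ext i; fin_cases i
  · exact h0
  · exact h1

@[simp] lemma vec2_app0 (a b : ℝ) : vec2 a b 0 = a := rfl
@[simp] lemma vec2_app1 (a b : ℝ) : vec2 a b 1 = b := rfl
@[simp] lemma perp_app0 (x : E2) : perp x 0 = -(x 1) := rfl
@[simp] lemma perp_app1 (x : E2) : perp x 1 = x 0 := rfl
@[simp] lemma E2_smul_app (r : ℝ) (x : E2) (i : Fin 2) : (r • x) i = r * x i := rfl
@[simp] lemma E2_add_app (x y : E2) (i : Fin 2) : (x + y) i = x i + y i := rfl
@[simp] lemma E2_sub_app (x y : E2) (i : Fin 2) : (x - y) i = x i - y i := rfl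

lemma norm_E2 (x : E2) : ‖x‖ = √(x 0 ^ 2 + x 1 ^ 2) := by
  rw [EuclideanSpace.norm_eq, Fin.sum_univ_two]
  simp [sq_abs]

lemma normsq_E2 (x : E2) : ‖x‖ ^ 2 = x 0 ^ 2 + x 1 ^ 2 := by
  rw [norm_E2, Real.sq_sqrt (by positivity)]

lemma polar_norm {r : ℝ} (hr : 0 ≤ r) (φ : ℝ) : ‖r • vec2 (Real.cos φ) (Real.sin φ)‖ = r := by
  rw [norm_E2]
  rw [show (r • vec2 (Real.cos φ) (Real.sin φ)) 0 = r * Real.cos φ from rfl,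
    show (r • vec2 (Real.cos φ) (Real.sin φ)) 1 = r * Real.sin φ from rfl,
    show (r * Real.cos φ)^2 + (r * Real.sin φ)^2 = r^2 by nlinarith [Real.sin_sq_add_cos_sq φ]]
  exact Real.sqrt_sq hr

lemma polar_rep (x : E2) (hx : 0 < x 0) :
    x = ‖x‖ • vec2 (Real.cos (arctan (x 1 / x 0))) (Real.sin (arctan (x 1 / x 0))) ∧
      eArg x = arctan (x 1 / x 0) := by
  set t := x 1 / x 0 with ht
  have hr : ‖x‖ = √(x 0 ^ 2 + x 1 ^ 2) := norm_E2 x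
  have hxnorm : 0 < ‖x‖ := by rw [hr]; positivity
  have hsq : √(1 + t ^ 2) = ‖x‖ / x 0 := by
    have h1 : (1 + t^2) = (x 0 ^ 2 + x 1 ^ 2)/ x 0 ^ 2 := by rw [ht]; field_simp
    rw [h1, Real.sqrt_div' _ (by positivity), Real.sqrt_sq hx.le, hr]
  have hcos : Real.cos (arctan t) = x 0 / ‖x‖ := by
    rw [Real.cos_arctan, hsq]; field_simp
  have hsin : Real.sin (arctan t) = x 1 / ‖x‖ := by
    rw [Real.sin_arctan, hsq, ht]; field_simp; try ring
  refine ⟨E2_ext ?_ ?_, ?_⟩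
  · show x 0 = ‖x‖ * (vec2 (Real.cos (arctan t)) (Real.sin (arctan t))) 0
    rw [show (vec2 (Real.cos (arctan t)) (Real.sin (arctan t))) 0 = Real.cos (arctan t) from rfl,
      hcos]; field_simp
  · show x 1 = ‖x‖ * (vec2 (Real.cos (arctan t)) (Real.sin (arctan t))) 1
    rw [show (vec2 (Real.cos (arctan t)) (Real.sin (arctan t))) 1 = Real.sin (arctan t) from rfl,
      hsin]; field_simp
  · have : (⟨x 0, x 1⟩ : ℂ) = ↑‖x‖ * (Complex.cos (arctan t) + Complex.sin (arctan t) * Complex.I) := by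
      rw [← Complex.ofReal_cos, ← Complex.ofReal_sin]
      apply Complex.ext <;> simp [hcos, hsin] <;> field_simp
    rw [eArg, this, Complex.arg_real_mul _ hxnorm,
      Complex.arg_cos_add_sin_mul_I
        ⟨by linarith [Real.neg_pi_div_two_lt_arctan t, Real.pi_pos],
         by linarith [Real.arctan_lt_pi_div_two t, Real.pi_pos]⟩]

lemma mem_sector_iff {α : ℝ} (hα : α ∈ Set.Ioo 0 (π / 2)) (x : E2) :
    x ∈ sector α ↔ 0 < x 0 ∧ |x 1| < x 0 * Real.tan α ∧ ‖x‖ < 1 := by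
  obtain ⟨hα0, hα2⟩ := hα
  constructor
  · rintro ⟨r, φ, hr0, hr1, hφ1, hφ2, rfl⟩
    have hφa : -(π/2) < φ := by linarith
    have hφb : φ < π/2 := by linarith
    have hcos : 0 < Real.cos φ := Real.cos_pos_of_mem_Ioo ⟨hφa, hφb⟩
    have h0 : (r • vec2 (Real.cos φ) (Real.sin φ)) 0 = r * Real.cos φ := rfl
    have h1 : (r • vec2 (Real.cos φ) (Real.sin φ)) 1 = r * Real.sin φ := rfl
    refine ⟨by rw [h0]; positivity, ?_, by rwa [polar_norm hr0.le]⟩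
    rw [h0, h1]
    have htu : Real.sin φ < Real.tan α * Real.cos φ := by
      have := Real.tan_lt_tan_of_lt_of_lt_pi_div_two hφa hα2 hφ2
      rwa [Real.tan_eq_sin_div_cos φ, div_lt_iff₀ hcos] at this
    have htl : -(Real.tan α * Real.cos φ) < Real.sin φ := by
      have := Real.tan_lt_tan_of_lt_of_lt_pi_div_two (by linarith : -(π/2) < -α) hφb hφ1
      rw [Real.tan_neg, Real.tan_eq_sin_div_cos φ, lt_div_iff₀ hcos] at this
      linarith
    rw [abs_mul, abs_of_nonneg hr0.le]
    have habs : |Real.sin φ| < Real.tan α * Real.cos φ := abs_lt.2 ⟨htl, htu⟩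
    calc r * |Real.sin φ| < r * (Real.tan α * Real.cos φ) := mul_lt_mul_of_pos_left habs hr0
      _ = r * Real.cos φ * Real.tan α := by ring
  · rintro ⟨h0, h1, h2⟩
    obtain ⟨hrep, _⟩ := polar_rep x h0
    have hxnorm : 0 < ‖x‖ := by rw [norm_E2]; positivity
    have habs := abs_lt.1 h1
    have ht1 : x 1 / x 0 < Real.tan α := by
      rw [div_lt_iff₀ h0]; linarith [habs.2]
    have ht2 : -Real.tan α < x 1 / x 0 := by
      rw [lt_div_iff₀ h0]; linarith [habs.1]
    have hat : Real.arctan (Real.tan α) = α := Real.arctan_tan (by linarith) hα2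
    refine ⟨‖x‖, arctan (x 1 / x 0), hxnorm, h2, ?_, ?_, hrep⟩
    · have := Real.arctan_strictMono ht2
      rwa [Real.arctan_neg, hat] at this
    · have := Real.arctan_strictMono ht1
      rwa [hat] at this


def perpL : E2 →L[ℝ] E2 := LinearMap.toContinuousLinearMap
  { toFun := perp
    map_add' := fun a b => E2_ext (by simp; try ring) (by simp; try ring)
    map_smul' := fun c a => E2_ext (by simp; try ring) (by simp; try ring) }

@[simp] lemma perpL_apply (v : E2) : perpL v = perp v := rfl

lemma hasFDerivAt_perp (x : E2) : HasFDerivAt perp perpL x := by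
  have h := perpL.hasFDerivAt (x := x)
  exact h.congr_of_eventuallyEq (Filter.Eventually.of_forall fun y => (perpL_apply y).symm)

def argD (x : E2) : E2 →L[ℝ] ℝ :=
  (x 0 / (x 0^2 + x 1^2)) • (EuclideanSpace.proj 1 : E2 →L[ℝ] ℝ)
    - (x 1 / (x 0^2 + x 1^2)) • (EuclideanSpace.proj 0 : E2 →L[ℝ] ℝ)

lemma argD_apply (x v : E2) : argD x v = (x 0 * v 1 - x 1 * v 0) / (x 0^2 + x 1^2) := by
  simp [argD, ContinuousLinearMap.sub_apply, ContinuousLinearMap.smul_apply]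
  ring

lemma hasFDerivAt_eArg {x : E2} (hx : 0 < x 0) : HasFDerivAt eArg (argD x) x := by
  have hopen : IsOpen {y : E2 | 0 < y 0} :=
    isOpen_lt continuous_const (EuclideanSpace.proj (0 : Fin 2) : E2 →L[ℝ] ℝ).continuous
  have hinv : HasFDerivAt (fun y : E2 => (y 0)⁻¹)
      ((-(x 0^2)⁻¹) • (EuclideanSpace.proj (0 : Fin 2) : E2 →L[ℝ] ℝ)) x :=
    (hasDerivAt_inv hx.ne').comp_hasFDerivAt x
      (EuclideanSpace.proj (0 : Fin 2) : E2 →L[ℝ] ℝ).hasFDerivAt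
  have hmul := (EuclideanSpace.proj (1 : Fin 2) : E2 →L[ℝ] ℝ).hasFDerivAt.mul hinv
  have hdiv : HasFDerivAt (fun y : E2 => y 1 / y 0)
      (x 1 • ((-(x 0^2)⁻¹) • (EuclideanSpace.proj (0 : Fin 2) : E2 →L[ℝ] ℝ)) +
        (x 0)⁻¹ • (EuclideanSpace.proj (1 : Fin 2) : E2 →L[ℝ] ℝ)) x := by
    have := hmul; simp only [Pi.mul_def, div_eq_mul_inv, PiLp.proj_apply] at this ⊢; exact this
  have harct := (Real.hasDerivAt_arctan (x 1 / x 0)).comp_hasFDerivAt x hdiv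
  have heq : eArg =ᶠ[nhds x] fun y => arctan (y 1 / y 0) := by
    filter_upwards [hopen.mem_nhds hx] with y hy using (polar_rep y hy).2
  have hfin := harct.congr_of_eventuallyEq heq
  have hx0 : x 0 ≠ 0 := hx.ne'
  refine hfin.congr_fderiv ?_
  apply ContinuousLinearMap.ext; intro v
  rw [argD_apply]
  simp only [ContinuousLinearMap.smul_apply, ContinuousLinearMap.add_apply, Function.comp,
    PiLp.proj_apply, smul_eq_mul]
  have h1 : 1 + (x 1 / x 0)^2 ≠ 0 := by positivity
  field_simp
  ring

def coneD (x : E2) : E2 →L[ℝ] E2 :=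
  (2⁻¹ : ℝ) • (eArg x • perpL + (argD x).smulRight (perp x) - ContinuousLinearMap.id ℝ E2)

lemma hasFDerivAt_coneU {x : E2} (hx : 0 < x 0) : HasFDerivAt coneU (coneD x) x := by
  have h1 := (hasFDerivAt_eArg hx).smul (hasFDerivAt_perp x)
  have h2 := h1.sub (hasFDerivAt_id x)
  have h3 := h2.const_smul (2⁻¹ : ℝ)
  exact h3

lemma jac_coneU_symm {x : E2} (hx : 0 < x 0) (i j : Fin 2) :
    jac coneU x i j + jac coneU x j i = -(x i * x j) / (x 0^2 + x 1^2) := by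
  have hD := (hasFDerivAt_coneU hx).fderiv
  have happ : ∀ i j : Fin 2, jac coneU x i j = coneD x (EuclideanSpace.single j 1) i := by
    intro i j
    show fderiv ℝ coneU x (EuclideanSpace.single j 1) i = _
    rw [hD]
  have hr2 : x 0^2 + x 1^2 ≠ 0 := by nlinarith
  rw [happ, happ]
  fin_cases i <;> fin_cases j <;>
    simp only [coneD, ContinuousLinearMap.smul_apply, ContinuousLinearMap.add_apply,
      ContinuousLinearMap.sub_apply, ContinuousLinearMap.smulRight_apply,
      ContinuousLinearMap.id_apply, perpL_apply, argD_apply, E2_smul_app, E2_sub_app,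
      E2_add_app, perp_app0, perp_app1, EuclideanSpace.single_apply, Fin.isValue] <;>
    norm_num <;> field_simp <;> ring
lemma pd_vh_lt {h : ℝ} (hh0 : 0 < h) {x : E2} (hx : ‖x‖ < h) (j : Fin 2) :
    pd j (vh h) x = x j / h := by
  have hev : vh h =ᶠ[nhds x] fun y => ‖y‖^2 / (2*h) + h/2 := by
    have hopen : IsOpen {y : E2 | ‖y‖ < h} := isOpen_lt continuous_norm continuous_const
    filter_upwards [hopen.mem_nhds hx] with y hy
    simp only [vh, if_pos hy]
  have h1 : HasFDerivAt (fun y : E2 => ‖y‖^2 / (2*h) + h/2)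
      (((2*h)⁻¹) • (2 • (innerSL ℝ x : E2 →L[ℝ] ℝ))) x := by
    have := ((hasStrictFDerivAt_norm_sq x).hasFDerivAt.const_smul ((2*h)⁻¹)).add_const (h/2)
    simpa [div_eq_inv_mul, smul_eq_mul] using this
  rw [pd, hev.fderiv_eq, h1.fderiv]
  have hj : (inner ℝ x (EuclideanSpace.single j 1) : ℝ) = x j := by
    simp [PiLp.inner_apply, EuclideanSpace.single_apply]
  simp only [ContinuousLinearMap.smul_apply, ContinuousLinearMap.coe_smul', Pi.smul_apply,
    innerSL_apply_apply, smul_eq_mul, hj]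
  field_simp
  ring

lemma pd_vh_gt {h : ℝ} (hh0 : 0 < h) {x : E2} (hx : h < ‖x‖) (j : Fin 2) :
    pd j (vh h) x = x j / ‖x‖ := by
  have hx0 : 0 < ‖x‖ := hh0.trans hx
  have hev : vh h =ᶠ[nhds x] fun y => ‖y‖ := by
    have hopen : IsOpen {y : E2 | h < ‖y‖} := isOpen_lt continuous_const continuous_norm
    filter_upwards [hopen.mem_nhds hx] with y hy
    simp only [vh, if_neg (not_lt.2 hy.le)]
  have h1 : HasFDerivAt (fun y : E2 => ‖y‖)
      ((1/(2*‖x‖)) • (2 • (innerSL ℝ x : E2 →L[ℝ] ℝ))) x := by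
    have h2 := (hasDerivAt_sqrt (pow_pos hx0 2).ne').comp_hasFDerivAt x
      (hasStrictFDerivAt_norm_sq x).hasFDerivAt
    have hfun : ((fun t => √t) ∘ fun y : E2 => ‖y‖^2) = fun y : E2 => ‖y‖ :=
      funext fun y => Real.sqrt_sq (norm_nonneg y)
    rw [hfun, Real.sqrt_sq (norm_nonneg x)] at h2
    exact h2
  rw [pd, hev.fderiv_eq, h1.fderiv]
  have hj : (inner ℝ x (EuclideanSpace.single j 1) : ℝ) = x j := by
    simp [PiLp.inner_apply, EuclideanSpace.single_apply]
  simp only [ContinuousLinearMap.smul_apply, ContinuousLinearMap.coe_smul', Pi.smul_apply,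
    innerSL_apply_apply, smul_eq_mul, hj]
  field_simp
  ring

lemma strain_eq {α h : ℝ} (hα : α ∈ Set.Ioo 0 (π/2)) (hh0 : 0 < h) {x : E2}
    (hx : x ∈ sector α) (hne : ‖x‖ ≠ h) :
    frob2 (strain coneU (vh h) x) = if ‖x‖ < h then (1 - ‖x‖^2/h^2)^2 else 0 := by
  obtain ⟨hx0, -, -⟩ := (mem_sector_iff hα x).1 hx
  have hr2 : (0:ℝ) < x 0^2 + x 1^2 := by nlinarith
  have hnormsq := normsq_E2 x
  have hnorm0 : 0 < ‖x‖ := by rw [norm_E2]; positivity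
  have hentry : ∀ i j, strain coneU (vh h) x i j =
      -(x i * x j) / (x 0^2 + x 1^2) + grad2 (vh h) x i * grad2 (vh h) x j := by
    intro i j
    show (jac coneU x + (jac coneU x)ᵀ + outo _ _) i j = _
    rw [Matrix.add_apply, Matrix.add_apply, Matrix.transpose_apply,
      show outo (grad2 (vh h) x) (grad2 (vh h) x) i j
        = grad2 (vh h) x i * grad2 (vh h) x j from rfl,
      jac_coneU_symm hx0 i j]
  rcases lt_or_gt_of_ne hne with hlt | hgt
  · rw [if_pos hlt]
    have hg : ∀ i : Fin 2, grad2 (vh h) x i = x i / h := by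
      intro i; fin_cases i
      · exact pd_vh_lt hh0 hlt 0
      · exact pd_vh_lt hh0 hlt 1
    rw [frob2, Fin.sum_univ_two, Fin.sum_univ_two, Fin.sum_univ_two]
    rw [hentry, hentry, hentry, hentry]
    simp only [hg]
    rw [hnormsq]
    field_simp
    ring
  · rw [if_neg (not_lt.2 hgt.le)]
    have hg : ∀ i : Fin 2, grad2 (vh h) x i = x i / ‖x‖ := by
      intro i; fin_cases i
      · exact pd_vh_gt hh0 hgt 0
      · exact pd_vh_gt hh0 hgt 1
    have hzero : ∀ i j, strain coneU (vh h) x i j = 0 := by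
      intro i j
      rw [hentry, hg, hg, div_mul_div_comm, ← sq, hnormsq]
      field_simp
      ring
    rw [frob2, Fin.sum_univ_two, Fin.sum_univ_two, Fin.sum_univ_two]
    simp only [hzero]
    norm_num

end MembraneAux
set_option maxHeartbeats 1000000
/-- **Membrane energy of the regularized cone**: with `u(x) = ½(arg x · x^⊥ − x)` and the
regularized cone `v_h`, one has `∫_S |∇u + ∇uᵀ + ∇v_h ⊗ ∇v_h|² dx ≤ 2 α h²`. -/
theorem membrane_energy_regularized_cone (α h : ℝ) (hα : α ∈ Set.Ioo 0 (π / 2))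
    (hh : h ∈ Set.Ioo (0 : ℝ) 1) :
    (∫ x in sector α, frob2 (strain coneU (vh h) x)) ≤ 2 * α * h ^ 2 := by
  classical
  obtain ⟨hα0, hα2⟩ := hα
  obtain ⟨hh0, hh1⟩ := hh
  have hSset : sector α = {x : E2 | 0 < x 0 ∧ |x 1| < x 0 * Real.tan α ∧ ‖x‖ < 1} :=
    Set.ext fun x => MembraneAux.mem_sector_iff ⟨hα0, hα2⟩ x
  have hSmeas : MeasurableSet (sector α) := by
    rw [hSset]
    have h1 : MeasurableSet {x : E2 | 0 < x 0} :=
      measurableSet_lt measurable_const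
        (EuclideanSpace.proj (0 : Fin 2) : E2 →L[ℝ] ℝ).continuous.measurable
    have h2 : MeasurableSet {x : E2 | |x 1| < x 0 * Real.tan α} :=
      measurableSet_lt
        ((EuclideanSpace.proj (1 : Fin 2) : E2 →L[ℝ] ℝ).continuous.measurable.abs)
        ((EuclideanSpace.proj (0 : Fin 2) : E2 →L[ℝ] ℝ).continuous.measurable.mul_const _)
    have h3 : MeasurableSet {x : E2 | ‖x‖ < 1} :=
      measurableSet_lt measurable_norm measurable_const
    have : {x : E2 | 0 < x 0 ∧ |x 1| < x 0 * Real.tan α ∧ ‖x‖ < 1}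
        = {x : E2 | 0 < x 0} ∩ ({x : E2 | |x 1| < x 0 * Real.tan α} ∩ {x : E2 | ‖x‖ < 1}) := by
      ext y; simp [Set.mem_inter_iff, and_assoc]
    rw [this]
    exact h1.inter (h2.inter h3)
  have hSsub : sector α ⊆ Metric.ball (0 : E2) 1 := by
    intro x hx
    rw [mem_ball_zero_iff]
    exact ((hSset ▸ hx : x ∈ {x : E2 | 0 < x 0 ∧ |x 1| < x 0 * Real.tan α ∧ ‖x‖ < 1})).2.2
  have hSfin : volume (sector α) ≠ ⊤ :=
    ((measure_mono hSsub).trans_lt measure_ball_lt_top).ne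
  set g : E2 → ℝ := fun x => if ‖x‖ < h then (1 - ‖x‖^2/h^2)^2 else 0 with hgdef
  have step1 : (∫ x in sector α, frob2 (strain coneU (vh h) x)) = ∫ x in sector α, g x := by
    apply setIntegral_congr_ae hSmeas
    have hsp : ∀ᵐ (x : E2) ∂volume, ‖x‖ ≠ h := by
      refine (MeasureTheory.ae_iff).2 ?_
      have h0 : volume (Metric.sphere (0:E2) h) = 0 := Measure.addHaar_sphere volume 0 h
      have : {x : E2 | ¬ ‖x‖ ≠ h} = Metric.sphere (0:E2) h := by
        ext y; simp [mem_sphere_zero_iff_norm]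
      rw [this]; exact h0
    filter_upwards [hsp] with x hne hmem
    exact MembraneAux.strain_eq ⟨hα0, hα2⟩ hh0 hmem hne
  have hgnn : ∀ x, 0 ≤ g x := by
    intro x; rw [hgdef]; dsimp only
    split
    · positivity
    · exact le_rfl
  have hgle : ∀ x : E2, g x ≤ (Metric.ball (0:E2) h).indicator (fun _ => (1:ℝ)) x := by
    intro x
    by_cases hb : ‖x‖ < h
    · rw [hgdef]; dsimp only; rw [if_pos hb, Set.indicator_of_mem (mem_ball_zero_iff.2 hb)]
      have h1 : 0 ≤ ‖x‖^2/h^2 := by positivity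
      have h2 : ‖x‖^2/h^2 ≤ 1 := by
        rw [div_le_one (by positivity)]
        nlinarith [norm_nonneg x]
      nlinarith
    · rw [hgdef]; dsimp only; rw [if_neg hb]
      exact Set.indicator_nonneg (fun _ _ => zero_le_one) x
  have hindle : ∀ x : E2, (Metric.ball (0:E2) h).indicator (fun _ => (1:ℝ)) x ≤ 1 := by
    intro x; rw [Set.indicator_apply]; split <;> norm_num
  have hindnn : ∀ x : E2, 0 ≤ (Metric.ball (0:E2) h).indicator (fun _ => (1:ℝ)) x :=
    fun x => Set.indicator_nonneg (fun _ _ => zero_le_one) x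
  have hconst : IntegrableOn (fun _ : E2 => (1:ℝ)) (sector α) :=
    integrableOn_const hSfin
  have hgmeas : Measurable g := by
    apply Measurable.ite (measurableSet_lt measurable_norm measurable_const)
    · exact (Continuous.measurable (by continuity))
    · exact measurable_const
  have hint_g : IntegrableOn g (sector α) := by
    refine hconst.mono' hgmeas.aestronglyMeasurable ?_
    refine Filter.Eventually.of_forall fun x => ?_
    rw [Real.norm_eq_abs, abs_of_nonneg (hgnn x)]
    exact (hgle x).trans (hindle x)
  have hint_ind : IntegrableOn ((Metric.ball (0:E2) h).indicator (fun _ => (1:ℝ))) (sector α) := by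
    refine hconst.mono' ((measurable_const.indicator measurableSet_ball).aestronglyMeasurable) ?_
    refine Filter.Eventually.of_forall fun x => ?_
    rw [Real.norm_eq_abs, abs_of_nonneg (hindnn x)]
    exact hindle x
  have step2 : (∫ x in sector α, g x)
      ≤ ∫ x in sector α, (Metric.ball (0:E2) h).indicator (fun _ => (1:ℝ)) x :=
    integral_mono hint_g hint_ind hgle
  have step3 : (∫ x in sector α, (Metric.ball (0:E2) h).indicator (fun _ => (1:ℝ)) x)
      = (volume (sector α ∩ Metric.ball (0:E2) h)).toReal := by
    rw [MeasureTheory.setIntegral_indicator measurableSet_ball, setIntegral_const]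
    simp
    rfl
  set B : Set E2 := {y : E2 | y 0 ∈ Set.Ioo (0:ℝ) h ∧
      y 1 ∈ Set.Ioo (-(h*Real.sin α)) (h*Real.sin α)} with hBdef
  have hsub2 : sector α ∩ Metric.ball (0:E2) h ⊆ B := by
    rintro x ⟨hxS, hxb⟩
    obtain ⟨r, φ, hr0, hr1, hφ1, hφ2, rfl⟩ := hxS
    have hnorm := MembraneAux.polar_norm hr0.le φ
    have hrh : r < h := by rw [← hnorm]; exact mem_ball_zero_iff.1 hxb
    have h0c : (r • vec2 (Real.cos φ) (Real.sin φ)) 0 = r * Real.cos φ := rfl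
    have h1c : (r • vec2 (Real.cos φ) (Real.sin φ)) 1 = r * Real.sin φ := rfl
    have hφa : -(π/2) < φ := by linarith
    have hφb : φ < π/2 := by linarith
    have hcos : 0 < Real.cos φ := Real.cos_pos_of_mem_Ioo ⟨hφa, hφb⟩
    have hsinu : Real.sin φ < Real.sin α :=
      Real.strictMonoOn_sin ⟨by linarith, by linarith⟩ ⟨by linarith, by linarith⟩ hφ2
    have hsinl : -Real.sin α < Real.sin φ := by
      have := Real.strictMonoOn_sin (a := -α) (b := φ)
        ⟨by linarith, by linarith⟩ ⟨by linarith, by linarith⟩ hφ1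
      rwa [Real.sin_neg] at this
    constructor
    · rw [h0c]
      exact ⟨by positivity, lt_of_le_of_lt (by nlinarith [Real.cos_le_one φ]) hrh⟩
    · rw [h1c]
      have hsa : 0 < Real.sin α := Real.sin_pos_of_pos_of_lt_pi hα0 (by linarith [Real.pi_pos])
      constructor
      · show -(h*Real.sin α) < r * Real.sin φ
        nlinarith
      · show r * Real.sin φ < h*Real.sin α
        nlinarith
  have hBvol : volume B = ENNReal.ofReal h * ENNReal.ofReal (2*(h*Real.sin α)) := by
    have hBeq : B = (MeasurableEquiv.toLp 2 (Fin 2 → ℝ)).symm ⁻¹'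
        (Set.univ.pi fun i : Fin 2 => if i = 0 then Set.Ioo (0:ℝ) h
          else Set.Ioo (-(h*Real.sin α)) (h*Real.sin α)) := by
      ext y
      simp only [hBdef, Set.mem_preimage, Set.mem_pi, Set.mem_univ, forall_true_left,
        Fin.forall_fin_two, Set.mem_setOf_eq]
      norm_num
    have hmeaspi : MeasurableSet (Set.univ.pi fun i : Fin 2 => if i = 0 then Set.Ioo (0:ℝ) h
          else Set.Ioo (-(h*Real.sin α)) (h*Real.sin α)) :=
      MeasurableSet.univ_pi fun i => by split <;> exact measurableSet_Ioo
    rw [hBeq, (EuclideanSpace.volume_preserving_symm_measurableEquiv_toLp (Fin 2)).measure_preimage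
      hmeaspi.nullMeasurableSet, volume_pi_pi, Fin.prod_univ_two]
    norm_num [Real.volume_Ioo]
    congr 1
    rw [← two_mul, ENNReal.ofReal_mul zero_le_two, ENNReal.ofReal_ofNat]
  have hBne : volume B ≠ ⊤ := by
    rw [hBvol]; exact ENNReal.mul_ne_top ENNReal.ofReal_ne_top ENNReal.ofReal_ne_top
  have step4 : (volume (sector α ∩ Metric.ball (0:E2) h)).toReal ≤ (volume B).toReal :=
    ENNReal.toReal_mono hBne (measure_mono hsub2)
  have hsa0 : 0 ≤ Real.sin α := (Real.sin_pos_of_pos_of_lt_pi hα0 (by linarith [Real.pi_pos])).le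
  have step5 : (volume B).toReal = h * (2*(h*Real.sin α)) := by
    rw [hBvol, ENNReal.toReal_mul, ENNReal.toReal_ofReal hh0.le,
      ENNReal.toReal_ofReal (by positivity)]
  have step6 : h * (2*(h*Real.sin α)) ≤ 2 * α * h ^ 2 := by
    have hsle : Real.sin α ≤ α := Real.sin_le hα0.le
    nlinarith
  calc (∫ x in sector α, frob2 (strain coneU (vh h) x))
      = ∫ x in sector α, g x := step1
    _ ≤ ∫ x in sector α, (Metric.ball (0:E2) h).indicator (fun _ => (1:ℝ)) x := step2
    _ = (volume (sector α ∩ Metric.ball (0:E2) h)).toReal := step3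
    _ ≤ (volume B).toReal := step4
    _ = h * (2*(h*Real.sin α)) := step5
    _ ≤ 2 * α * h ^ 2 := step6
end
end

section
/- Radial projection Hausdorff measure bound: Let β ∈ (0, 1), let A ⊂ (−π, π) be a Lebesgue measurable set, and let E ⊂ ℝ² be a set such that for every φ ∈ A there exists x ∈ E with |x| ≥ 1 − β and x/|x| = (cos φ, sin φ). Then ℋ¹(E) ≥ (1 − β) ℒ¹(A), where ℋ¹ is the one-dimensional Hausdorff measure and ℒ¹ the one-dimensional Lebesgue measure. -/
open MeasureTheory Real Set Matrix
open scoped RealInnerProductSpace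

noncomputable section

namespace RadialAux

/-- The complex number corresponding to `x ∈ ℝ²`. -/
def cplx (x : E2) : ℂ := ⟨x 0, x 1⟩

lemma eArg_eq_arg (x : E2) : eArg x = Complex.arg (cplx x) := rfl

lemma abs_cplx (x : E2) : ‖cplx x‖ = ‖x‖ := by
  rw [EuclideanSpace.norm_eq, Complex.norm_def, Complex.normSq_apply]
  congr 1
  simp [cplx, Fin.sum_univ_two, Real.norm_eq_abs, sq_abs]
  ring

lemma abs_cplx_sub (x y : E2) : ‖cplx x - cplx y‖ = dist x y := by
  rw [EuclideanSpace.dist_eq, Complex.norm_def, Complex.normSq_apply]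
  congr 1
  simp [cplx, Fin.sum_univ_two, Real.dist_eq, sq_abs]
  ring

lemma vec2_apply_zero (a b : ℝ) : vec2 a b 0 = a := rfl
lemma vec2_apply_one (a b : ℝ) : vec2 a b 1 = b := rfl

lemma eArg_eq {x : E2} {φ : ℝ} (hx : 0 < ‖x‖)
    (h : ‖x‖⁻¹ • x = vec2 (Real.cos φ) (Real.sin φ)) (hφ : φ ∈ Set.Ioc (-π) π) :
    eArg x = φ := by
  have hne : ‖x‖ ≠ 0 := ne_of_gt hx
  have h0 : x 0 = ‖x‖ * Real.cos φ := by
    have := congrArg (fun v : E2 => v 0) h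
    simp only [PiLp.smul_apply, smul_eq_mul, vec2_apply_zero] at this
    field_simp at this
    linarith [this]
  have h1 : x 1 = ‖x‖ * Real.sin φ := by
    have := congrArg (fun v : E2 => v 1) h
    simp only [PiLp.smul_apply, smul_eq_mul, vec2_apply_one] at this
    field_simp at this
    linarith [this]
  have hc : cplx x = (‖x‖ : ℂ) * (Complex.cos φ + Complex.sin φ * Complex.I) := by
    apply Complex.ext <;>
      simp [cplx, h0, h1, Complex.cos_ofReal_re, Complex.sin_ofReal_re]
  rw [eArg_eq_arg, hc, Complex.arg_real_mul _ hx, Complex.arg_cos_add_sin_mul_I hφ]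

/-- Concavity of `sin`: linear lower bound on `[0, T]`. -/
lemma sin_lower {t T : ℝ} (ht : 0 ≤ t) (htT : t ≤ T) (hT : T ≤ π) :
    Real.sin T / T * t ≤ Real.sin t := by
  rcases eq_or_lt_of_le (ht.trans htT) with hT0 | hT0
  · have ht0 : t = 0 := le_antisymm (htT.trans hT0.symm.le) ht
    simp [ht0, ← hT0]
  · have key : (1 - t / T) • Real.sin 0 + (t / T) • Real.sin T ≤
        Real.sin ((1 - t / T) • 0 + (t / T) • T) :=
      strictConcaveOn_sin_Icc.concaveOn.2 ⟨le_rfl, Real.pi_pos.le⟩ ⟨hT0.le, hT⟩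
        (by rw [sub_nonneg]; exact div_le_one_of_le₀ htT hT0.le)
        (by positivity) (by ring)
    simp only [smul_eq_mul, mul_zero, Real.sin_zero, zero_add] at key
    rw [div_mul_cancel₀ _ (ne_of_gt hT0)] at key
    calc Real.sin T / T * t = t / T * Real.sin T := by ring
    _ ≤ Real.sin t := by linarith [key]

/-- Chord length lower bound on the region `{|z| ≥ ρ}`. -/
lemma chord_lower {ρ : ℝ} (hρ : 0 ≤ ρ) (z w : ℂ) (hz : ρ ≤ ‖z‖)
    (hw : ρ ≤ ‖w‖) :
    2 * ρ * Real.sin (|Complex.arg z - Complex.arg w| / 2) ≤ ‖z - w‖ := by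
  set r := ‖z‖ with hr
  set s := ‖w‖ with hs
  set φ := Complex.arg z with hφ
  set ψ := Complex.arg w with hψ
  have hzz : z = (r : ℂ) * (Complex.cos φ + Complex.sin φ * Complex.I) :=
    (Complex.norm_mul_cos_add_sin_mul_I z).symm
  have hww : w = (s : ℂ) * (Complex.cos ψ + Complex.sin ψ * Complex.I) :=
    (Complex.norm_mul_cos_add_sin_mul_I w).symm
  have hre : (z - w).re = r * Real.cos φ - s * Real.cos ψ := by
    conv_lhs => rw [hzz, hww]
    simp [Complex.cos_ofReal_re, Complex.sin_ofReal_re]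
  have him : (z - w).im = r * Real.sin φ - s * Real.sin ψ := by
    conv_lhs => rw [hzz, hww]
    simp [Complex.cos_ofReal_re, Complex.sin_ofReal_re]
  have hsq : ‖z - w‖ ^ 2 = r ^ 2 + s ^ 2 - 2 * r * s * Real.cos (φ - ψ) := by
    rw [Complex.sq_norm, Complex.normSq_apply, hre, him, Real.cos_sub]
    nlinarith [Real.sin_sq_add_cos_sq φ, Real.sin_sq_add_cos_sq ψ]
  have habs : |φ - ψ| ≤ 2 * π := by
    have h1 := Complex.arg_le_pi z
    have h2 := Complex.neg_pi_lt_arg z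
    have h3 := Complex.arg_le_pi w
    have h4 := Complex.neg_pi_lt_arg w
    rw [abs_le]; constructor <;> [linarith; linarith]
  have hsin_nonneg : 0 ≤ Real.sin (|φ - ψ| / 2) := by
    apply Real.sin_nonneg_of_nonneg_of_le_pi
    · positivity
    · linarith
  have hcos : Real.cos (φ - ψ) = 1 - 2 * Real.sin (|φ - ψ| / 2) ^ 2 := by
    have h2 : Real.cos (φ - ψ) = 1 - 2 * Real.sin ((φ - ψ) / 2) ^ 2 := by
      have hcc := Real.cos_two_mul ((φ - ψ) / 2)
      have h3 := Real.sin_sq_add_cos_sq ((φ - ψ) / 2)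
      have e : 2 * ((φ - ψ) / 2) = φ - ψ := by ring
      rw [e] at hcc
      linarith
    rcases abs_cases (φ - ψ) with ⟨he, _⟩ | ⟨he, _⟩
    · rw [he]; exact h2
    · rw [he]
      rw [h2, neg_div, Real.sin_neg]
      ring
  have key : (2 * ρ * Real.sin (|φ - ψ| / 2)) ^ 2 ≤ ‖z - w‖ ^ 2 := by
    rw [hsq, hcos]
    have hrs : ρ * ρ ≤ r * s := mul_le_mul hz hw hρ ((hρ.trans hz))
    nlinarith [hrs, sq_nonneg (r - s), sq_nonneg (Real.sin (|φ - ψ| / 2))]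
  have hA : 0 ≤ 2 * ρ * Real.sin (|φ - ψ| / 2) :=
    mul_nonneg (mul_nonneg (by norm_num) hρ) hsin_nonneg
  calc 2 * ρ * Real.sin (|φ - ψ| / 2)
      = Real.sqrt ((2 * ρ * Real.sin (|φ - ψ| / 2)) ^ 2) := (Real.sqrt_sq hA).symm
    _ ≤ Real.sqrt (‖z - w‖ ^ 2) := Real.sqrt_le_sqrt key
    _ = ‖z - w‖ := Real.sqrt_sq (norm_nonneg _)

/-- Superadditivity of a measure over finitely many disjoint measurable pieces. -/
lemma sum_measure_inter_le {α : Type*} [MeasurableSpace α] (μ : MeasureTheory.Measure α)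
    (s : ℕ → Set α) (hm : ∀ k, MeasurableSet (s k)) (hd : Pairwise (Function.onFun Disjoint s))
    (F : Finset ℕ) (t : Set α) :
    ∑ k ∈ F, μ (t ∩ s k) ≤ μ t := by
  classical
  induction F using Finset.induction_on generalizing t with
  | empty => simp
  | @insert a F ha ih =>
    rw [Finset.sum_insert ha]
    have h1 : μ (t ∩ s a) + μ (t \ s a) = μ t := measure_inter_add_diff t (hm a)
    have h2 : ∀ k ∈ F, t ∩ s k = (t \ s a) ∩ s k := by
      intro k hk
      have hka : k ≠ a := by rintro rfl; exact ha hk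
      have := hd hka
      ext y
      simp only [Set.mem_inter_iff, Set.mem_diff]
      constructor
      · rintro ⟨hy, hys⟩
        exact ⟨⟨hy, fun hya => (Set.disjoint_left.1 this) hys hya⟩, hys⟩
      · rintro ⟨⟨hy, _⟩, hys⟩
        exact ⟨hy, hys⟩
    calc μ (t ∩ s a) + ∑ k ∈ F, μ (t ∩ s k)
        = μ (t ∩ s a) + ∑ k ∈ F, μ ((t \ s a) ∩ s k) := by
          congr 1; exact Finset.sum_congr rfl fun k hk => by rw [h2 k hk]
      _ ≤ μ (t ∩ s a) + μ (t \ s a) := add_le_add_right (ih (t \ s a)) _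
      _ = μ t := h1

lemma measurable_eArg : Measurable eArg := by
  have hc : Continuous cplx := by
    have h0 : Continuous fun x : E2 => x 0 := by
      exact (EuclideanSpace.proj (0 : Fin 2)).continuous
    have h1 : Continuous fun x : E2 => x 1 := by
      exact (EuclideanSpace.proj (1 : Fin 2)).continuous
    have : ∀ x : E2, cplx x = (x 0 : ℂ) + (x 1 : ℂ) * Complex.I := by
      intro x; apply Complex.ext <;> simp [cplx]
    rw [show cplx = fun x : E2 => (x 0 : ℂ) + (x 1 : ℂ) * Complex.I from funext this]
    exact ((Complex.continuous_ofReal.comp h0).add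
      ((Complex.continuous_ofReal.comp h1).mul continuous_const))
  exact Complex.measurable_arg.comp hc.measurable

end RadialAux

open scoped Topology ENNReal

/-- **Radial projection Hausdorff measure bound**: if `β ∈ (0,1)`, `A ⊆ (−π, π)` is Lebesgue
measurable, and `E ⊆ ℝ²` is such that every angle `φ ∈ A` is attained by some `x ∈ E` with
`|x| ≥ 1 − β`, then `ℋ¹(E) ≥ (1 − β) ℒ¹(A)`. -/
theorem radial_projection_bound (β : ℝ) (hβ : β ∈ Set.Ioo (0 : ℝ) 1)
    (A : Set ℝ) (hA : MeasurableSet A) (hAsub : A ⊆ Set.Ioo (-π) π)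
    (E : Set E2)
    (hE : ∀ φ ∈ A, ∃ x ∈ E, 1 - β ≤ ‖x‖ ∧ ‖x‖⁻¹ • x = vec2 (Real.cos φ) (Real.sin φ)) :
    ENNReal.ofReal (1 - β) * volume A ≤ μH[1] E := by
  classical
  obtain ⟨hβ0, hβ1⟩ := hβ
  set ρ : ℝ := 1 - β with hρdef
  have hρ : 0 < ρ := by rw [hρdef]; linarith
  have hAfin : volume A ≠ ⊤ := by
    refine ne_of_lt (lt_of_le_of_lt (measure_mono hAsub) ?_)
    rw [Real.volume_Ioo]
    exact ENNReal.ofReal_lt_top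
  have key : ∀ n : ℕ,
      ENNReal.ofReal (ρ * (Real.sin (π / ((n:ℝ) + 2)) / (π / ((n:ℝ) + 2)))) * volume A
        ≤ μH[1] E := by
    intro n
    set N : ℕ := n + 2 with hN
    have hNR : ((N : ℝ)) = (n : ℝ) + 2 := by rw [hN]; push_cast; ring
    set ε : ℝ := 2 * π / ((n:ℝ) + 2) with hε
    have hn2 : (0:ℝ) < (n:ℝ) + 2 := by positivity
    have hε0 : 0 < ε := by rw [hε]; positivity
    have hhalf : ε / 2 = π / ((n:ℝ) + 2) := by rw [hε]; ring
    have hNε : ((n:ℝ) + 2) * ε = 2 * π := by rw [hε]; field_simp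
    have hεπ : ε ≤ π := by
      rw [hε, div_le_iff₀ hn2]
      nlinarith [Real.pi_pos, (Nat.cast_nonneg n : (0:ℝ) ≤ (n:ℝ))]
    have hsinpos : 0 < Real.sin (ε / 2) := by
      apply Real.sin_pos_of_pos_of_lt_pi (by positivity)
      calc ε / 2 ≤ π / 2 := by linarith
        _ < π := by linarith [Real.pi_pos]
    set I : ℕ → Set ℝ := fun k => Set.Ico (-π + k * ε) (-π + k * ε + ε) with hI
    set S : ℕ → Set E2 := fun k => {x : E2 | ρ ≤ ‖x‖} ∩ eArg ⁻¹' (I k) with hS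
    have hSmeas : ∀ k, MeasurableSet (S k) := fun k =>
      ((isClosed_le continuous_const continuous_norm).measurableSet).inter
        (RadialAux.measurable_eArg measurableSet_Ico)
    have hIdisj : Pairwise (Function.onFun Disjoint I) := by
      apply (pairwise_disjoint_on I).2
      intro k l hkl
      rw [hI]
      simp only
      rw [Set.Ico_disjoint_Ico]
      have hk1 : (k:ℝ) + 1 ≤ (l:ℝ) := by exact_mod_cast hkl
      have h2 : -π + (k:ℝ) * ε + ε ≤ -π + (l:ℝ) * ε := by nlinarith
      calc min (-π + (k:ℝ)*ε + ε) (-π + (l:ℝ)*ε + ε) ≤ -π + (k:ℝ)*ε + ε := min_le_left _ _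
        _ ≤ max (-π + (k:ℝ)*ε) (-π + (l:ℝ)*ε) := le_trans h2 (le_max_right _ _)
    have hSdisj : Pairwise (Function.onFun Disjoint S) := fun k l hkl =>
      ((hIdisj hkl).preimage eArg).mono Set.inter_subset_right Set.inter_subset_right
    set Kr : ℝ := ε / (2 * ρ * Real.sin (ε / 2)) with hKr
    have hKrpos : 0 < Kr := by rw [hKr]; positivity
    have hLip : ∀ k, LipschitzOnWith (Real.toNNReal Kr) eArg (E ∩ S k) := by
      intro k
      apply LipschitzOnWith.of_dist_le_mul
      intro x hx y hy
      have hx1 : ρ ≤ ‖x‖ := hx.2.1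
      have hy1 : ρ ≤ ‖y‖ := hy.2.1
      have hxI : eArg x ∈ I k := hx.2.2
      have hyI : eArg y ∈ I k := hy.2.2
      have hδ : |eArg x - eArg y| ≤ ε := by
        rw [hI] at hxI hyI
        simp only [Set.mem_Ico] at hxI hyI
        rw [abs_le]
        constructor <;> [linarith [hxI.1, hyI.2]; linarith [hxI.2, hyI.1]]
      have hchord := RadialAux.chord_lower hρ.le (RadialAux.cplx x) (RadialAux.cplx y)
        (by rw [RadialAux.abs_cplx]; exact hx1) (by rw [RadialAux.abs_cplx]; exact hy1)
      rw [RadialAux.abs_cplx_sub] at hchord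
      rw [← RadialAux.eArg_eq_arg, ← RadialAux.eArg_eq_arg] at hchord
      have hsinc := RadialAux.sin_lower (t := |eArg x - eArg y| / 2) (T := ε / 2)
        (by positivity) (by linarith) (by linarith [Real.pi_pos])
      have hmain : ρ * (Real.sin (ε/2) / (ε/2)) * |eArg x - eArg y| ≤ dist x y := by
        calc ρ * (Real.sin (ε/2) / (ε/2)) * |eArg x - eArg y|
            = 2 * ρ * (Real.sin (ε/2) / (ε/2) * (|eArg x - eArg y| / 2)) := by ring
          _ ≤ 2 * ρ * Real.sin (|eArg x - eArg y| / 2) :=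
              mul_le_mul_of_nonneg_left hsinc (by positivity)
          _ ≤ dist x y := hchord
      rw [Real.dist_eq, Real.coe_toNNReal _ hKrpos.le, hKr, div_mul_eq_mul_div,
        le_div_iff₀ (by positivity : (0:ℝ) < 2 * ρ * Real.sin (ε/2))]
      have hid : ρ * (Real.sin (ε/2) / (ε/2)) * |eArg x - eArg y| * ε
          = |eArg x - eArg y| * (2 * ρ * Real.sin (ε/2)) := by
        field_simp
      calc |eArg x - eArg y| * (2 * ρ * Real.sin (ε/2))
          = ρ * (Real.sin (ε/2) / (ε/2)) * |eArg x - eArg y| * ε := hid.symm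
        _ ≤ dist x y * ε := mul_le_mul_of_nonneg_right hmain hε0.le
        _ = ε * dist x y := mul_comm _ _
    have himg : ∀ k, A ∩ I k ⊆ eArg '' (E ∩ S k) := by
      intro k φ hφ
      obtain ⟨hφA, hφI⟩ := hφ
      obtain ⟨x, hxE, hxρ, hxdir⟩ := hE φ hφA
      have hxpos : 0 < ‖x‖ := lt_of_lt_of_le hρ hxρ
      have harg : eArg x = φ :=
        RadialAux.eArg_eq hxpos hxdir ⟨(hAsub hφA).1, (hAsub hφA).2.le⟩
      refine ⟨x, ⟨hxE, hxρ, ?_⟩, harg⟩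
      show eArg x ∈ I k
      rw [harg]; exact hφI
    have hper : ∀ k, ENNReal.ofReal (ρ * (Real.sin (ε/2) / (ε/2))) * volume (A ∩ I k)
        ≤ μH[1] (E ∩ S k) := by
      intro k
      have h1 : volume (A ∩ I k) ≤ ENNReal.ofReal Kr * μH[1] (E ∩ S k) := by
        calc volume (A ∩ I k) = μH[1] (A ∩ I k) := by
              rw [MeasureTheory.hausdorffMeasure_real]
          _ ≤ μH[1] (eArg '' (E ∩ S k)) := measure_mono (himg k)
          _ ≤ (Real.toNNReal Kr : ENNReal) ^ (1:ℝ) * μH[1] (E ∩ S k) :=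
              (hLip k).hausdorffMeasure_image_le zero_le_one
          _ = ENNReal.ofReal Kr * μH[1] (E ∩ S k) := by
              rw [ENNReal.rpow_one]; rfl
      have hcK : ρ * (Real.sin (ε/2) / (ε/2)) * Kr = 1 := by
        rw [hKr]
        field_simp
      calc ENNReal.ofReal (ρ * (Real.sin (ε/2) / (ε/2))) * volume (A ∩ I k)
          ≤ ENNReal.ofReal (ρ * (Real.sin (ε/2) / (ε/2))) *
              (ENNReal.ofReal Kr * μH[1] (E ∩ S k)) := mul_le_mul_right h1 _
        _ = ENNReal.ofReal (ρ * (Real.sin (ε/2) / (ε/2)) * Kr) * μH[1] (E ∩ S k) := by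
            rw [← mul_assoc, ← ENNReal.ofReal_mul (by positivity)]
        _ = μH[1] (E ∩ S k) := by rw [hcK, ENNReal.ofReal_one, one_mul]
    have hcover : A ⊆ ⋃ k ∈ Finset.range N, (A ∩ I k) := by
      intro φ hφ
      have hφ' := hAsub hφ
      set k : ℕ := ⌊(φ + π) / ε⌋₊ with hk
      have hnn : 0 ≤ (φ + π) / ε := div_nonneg (by linarith [hφ'.1]) hε0.le
      have hk1 : (k:ℝ) * ε ≤ φ + π := by
        rw [← le_div_iff₀ hε0]
        exact Nat.floor_le hnn
      have hk2 : φ + π < ((k:ℝ) + 1) * ε := by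
        rw [← div_lt_iff₀ hε0]
        exact_mod_cast Nat.lt_floor_add_one ((φ + π) / ε)
      have hkN : k < N := by
        have hlt : (φ + π) / ε < (N:ℝ) := by
          rw [div_lt_iff₀ hε0, hNR]
          have hc := mul_comm ε ((n:ℝ) + 2)
          linarith [hφ'.2, hNε]
        exact_mod_cast (Nat.floor_lt hnn).2 hlt
      simp only [Set.mem_iUnion, Finset.mem_range]
      refine ⟨k, hkN, hφ, ?_⟩
      show φ ∈ Set.Ico (-π + (k:ℝ) * ε) (-π + (k:ℝ) * ε + ε)
      constructor
      · linarith
      · nlinarith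
    have hsum1 : volume A ≤ ∑ k ∈ Finset.range N, volume (A ∩ I k) :=
      (measure_mono hcover).trans (measure_biUnion_finset_le _ _)
    have hsum2 : ∑ k ∈ Finset.range N, μH[1] (E ∩ S k) ≤ μH[1] E :=
      RadialAux.sum_measure_inter_le _ S hSmeas hSdisj _ E
    calc ENNReal.ofReal (ρ * (Real.sin (π/((n:ℝ)+2)) / (π/((n:ℝ)+2)))) * volume A
        = ENNReal.ofReal (ρ * (Real.sin (ε/2) / (ε/2))) * volume A := by rw [hhalf]
      _ ≤ ENNReal.ofReal (ρ * (Real.sin (ε/2) / (ε/2))) *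
            ∑ k ∈ Finset.range N, volume (A ∩ I k) := mul_le_mul_right hsum1 _
      _ = ∑ k ∈ Finset.range N,
            ENNReal.ofReal (ρ * (Real.sin (ε/2) / (ε/2))) * volume (A ∩ I k) := by
          rw [Finset.mul_sum]
      _ ≤ ∑ k ∈ Finset.range N, μH[1] (E ∩ S k) := Finset.sum_le_sum fun k _ => hper k
      _ ≤ μH[1] E := hsum2
  have h0 : Filter.Tendsto (fun n : ℕ => π / ((n:ℝ) + 2)) Filter.atTop (𝓝 0) := by
    apply Filter.Tendsto.div_atTop tendsto_const_nhds
    exact Filter.tendsto_atTop_add_const_right _ 2 tendsto_natCast_atTop_atTop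
  have h0' : Filter.Tendsto (fun n : ℕ => π / ((n:ℝ) + 2)) Filter.atTop (𝓝[≠] 0) := by
    apply tendsto_nhdsWithin_of_tendsto_nhds_of_eventually_within _ h0
    filter_upwards with n
    have hp : 0 < π / ((n:ℝ)+2) := by positivity
    simp only [Set.mem_compl_iff, Set.mem_singleton_iff]
    exact ne_of_gt hp
  have hslope : Filter.Tendsto (fun t : ℝ => Real.sin t / t) (𝓝[≠] (0:ℝ)) (𝓝 1) := by
    have hd : HasDerivAt Real.sin 1 0 := by simpa using Real.hasDerivAt_sin 0
    have h1 := hasDerivAt_iff_tendsto_slope.1 hd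
    refine h1.congr fun t => ?_
    simp [slope, Real.sin_zero, div_eq_inv_mul]
  have h3 : Filter.Tendsto
      (fun n : ℕ => Real.sin (π/((n:ℝ)+2)) / (π/((n:ℝ)+2))) Filter.atTop (𝓝 1) :=
    hslope.comp h0'
  have h4 : Filter.Tendsto
      (fun n : ℕ => ρ * (Real.sin (π/((n:ℝ)+2)) / (π/((n:ℝ)+2)))) Filter.atTop (𝓝 ρ) := by
    simpa using h3.const_mul ρ
  have h5 : Filter.Tendsto
      (fun n : ℕ => ENNReal.ofReal (ρ * (Real.sin (π/((n:ℝ)+2)) / (π/((n:ℝ)+2)))))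
      Filter.atTop (𝓝 (ENNReal.ofReal ρ)) :=
    (ENNReal.continuous_ofReal.tendsto ρ).comp h4
  have hlim : Filter.Tendsto
      (fun n : ℕ => ENNReal.ofReal (ρ * (Real.sin (π/((n:ℝ)+2)) / (π/((n:ℝ)+2)))) * volume A)
      Filter.atTop (𝓝 (ENNReal.ofReal ρ * volume A)) :=
    ENNReal.Tendsto.mul_const h5 (Or.inr hAfin)
  exact le_of_tendsto hlim (Filter.Eventually.of_forall key)
end
end

section
/- Jensen estimate for the bending energy in polar coordinates: Let α ∈ (0, π/2), β ∈ (0, α), 0 < ε < 1, write e_φ = (cos φ, sin φ), and let v be of class C² on an open neighborhood of the closed set T = {s e_φ : ε ≤ s ≤ 1, −α+β ≤ φ ≤ α−β}. Then ∫_T |∇²v(x)|² dx ≥ (1/(2α)) ∫_ε^1 s^{−1} ( ∫_{−α+β}^{α−β} |∂_φ(∇v(s e_φ))| dφ )² ds, where |∇²v| is the Frobenius norm and ∂_φ(∇v(s e_φ)) = ∇²v(s e_φ) · (s e_φ⊥) is the derivative of φ ↦ ∇v(s e_φ). -/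
open MeasureTheory Real Set Matrix
open scoped RealInnerProductSpace

noncomputable section

/-- The closed truncated sector `T = {s e_ψ : ε ≤ s ≤ 1, −α+β ≤ ψ ≤ α−β}`. -/
def Tset (α β ε : ℝ) : Set E2 :=
  {x | ∃ s ψ : ℝ, ε ≤ s ∧ s ≤ 1 ∧ -α + β ≤ ψ ∧ ψ ≤ α - β ∧
    x = s • vec2 (Real.cos ψ) (Real.sin ψ)}

/-- The Euclidean norm of a vector in `Fin 2 → ℝ`. -/
def evnorm (w : Fin 2 → ℝ) : ℝ := Real.sqrt (∑ i, (w i) ^ 2)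


section JPBAux

open Filter

lemma jpb_frob2_nonneg (M : Matrix (Fin 2) (Fin 2) ℝ) : 0 ≤ frob2 M :=
  Finset.sum_nonneg fun _ _ => Finset.sum_nonneg fun _ _ => sq_nonneg _

lemma jpb_evnorm_nonneg (w : Fin 2 → ℝ) : 0 ≤ evnorm w := Real.sqrt_nonneg _

lemma jpb_smul_vec2 (s a b : ℝ) : s • vec2 a b = vec2 (s*a) (s*b) := by
  ext i; fin_cases i <;> rfl

lemma jpb_cs_Ioc {a b : ℝ} (hab : a ≤ b) {f : ℝ → ℝ} (hf : ContinuousOn f (Set.Icc a b))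
    (h0 : ∀ x ∈ Set.Icc a b, 0 ≤ f x) :
    (∫ x in Set.Ioc a b, f x) ^ 2 ≤ (b - a) * ∫ x in Set.Ioc a b, (f x) ^ 2 := by
  set μ := volume.restrict (Set.Ioc a b) with hμ
  haveI : IsFiniteMeasure μ := by
    constructor
    rw [hμ, Measure.restrict_apply_univ, Real.volume_Ioc]
    exact ENNReal.ofReal_lt_top
  obtain ⟨C, hC⟩ := (isCompact_Icc (a := a) (b := b)).exists_bound_of_continuousOn hf
  have hfm : AEStronglyMeasurable f μ :=
    (hf.mono Set.Ioc_subset_Icc_self).aestronglyMeasurable measurableSet_Ioc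
  have hbd : ∀ᵐ x ∂μ, ‖f x‖ ≤ C := by
    rw [hμ, ae_restrict_iff' measurableSet_Ioc]
    exact Filter.Eventually.of_forall fun x hx => hC x (Set.Ioc_subset_Icc_self hx)
  have hmem : MemLp f (ENNReal.ofReal 2) μ := MemLp.of_bound hfm C hbd
  have hone : MemLp (fun _ : ℝ => (1:ℝ)) (ENNReal.ofReal 2) μ := memLp_const 1
  have hconj : Real.HolderConjugate 2 2 := Real.HolderConjugate.two_two
  have hf0 : 0 ≤ᶠ[ae μ] f := by
    rw [hμ]
    refine (ae_restrict_iff' measurableSet_Ioc).2 ?_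
    exact Filter.Eventually.of_forall fun x hx => h0 x (Set.Ioc_subset_Icc_self hx)
  have H := integral_mul_le_Lp_mul_Lq_of_nonneg hconj hf0
    (Filter.Eventually.of_forall fun _ => zero_le_one) hmem hone
  simp only [mul_one, one_pow] at H
  have hrw : (∫ x, f x ^ (2:ℝ) ∂μ) = ∫ x, f x ^ 2 ∂μ := by
    refine integral_congr_ae (Filter.Eventually.of_forall fun x => ?_)
    rw [show ((2:ℝ):ℝ) = ((2:ℕ):ℝ) by norm_num]
    exact Real.rpow_natCast (f x) 2
  have hone2 : (∫ _ : ℝ, (1:ℝ) ∂μ) = b - a := by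
    simp [hμ, Real.volume_Ioc, ENNReal.toReal_ofReal (sub_nonneg.2 hab), hab]
  rw [hrw, show (fun a => (1:ℝ) ^ (2:ℝ)) = (fun _ : ℝ => (1:ℝ)) by funext; simp, hone2] at H
  have hA : 0 ≤ ∫ x, f x ∂μ := integral_nonneg_of_ae hf0
  have hB : 0 ≤ ∫ x, f x ^ 2 ∂μ := integral_nonneg fun x => sq_nonneg _
  calc (∫ x in Set.Ioc a b, f x) ^ 2
      ≤ ((∫ x, f x ^2 ∂μ) ^ (1/(2:ℝ)) * (b - a) ^ (1/(2:ℝ)))^2 := by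
        apply pow_le_pow_left₀ hA
        simpa using H
    _ = (b - a) * ∫ x in Set.Ioc a b, (f x)^2 := by
        rw [mul_pow, ← Real.rpow_natCast ((∫ x, f x ^2 ∂μ) ^ (1/(2:ℝ))) 2,
          ← Real.rpow_natCast ((b-a) ^ (1/(2:ℝ))) 2, ← Real.rpow_mul hB,
          ← Real.rpow_mul (sub_nonneg.2 hab)]
        norm_num
        ring

lemma jpb_evnorm_sq_le (M : Matrix (Fin 2) (Fin 2) ℝ) (ψ : ℝ) {s : ℝ} (_hs : 0 ≤ s) :
    evnorm (M.mulVec (s • ![-(Real.sin ψ), Real.cos ψ])) ^ 2 ≤ s ^ 2 * frob2 M := by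
  rw [evnorm, Real.sq_sqrt (by positivity)]
  have h1 : Real.sin ψ ^ 2 + Real.cos ψ ^ 2 = 1 := Real.sin_sq_add_cos_sq ψ
  simp only [Matrix.mulVec, dotProduct, Fin.sum_univ_two, frob2, Pi.smul_apply,
    smul_eq_mul, Matrix.cons_val_zero, Matrix.cons_val_one, Matrix.head_cons]
  nlinarith [sq_nonneg (M 0 0 * Real.cos ψ + M 0 1 * Real.sin ψ),
    sq_nonneg (M 1 0 * Real.cos ψ + M 1 1 * Real.sin ψ), sq_nonneg s,
    sq_nonneg (s * (M 0 0 * Real.cos ψ + M 0 1 * Real.sin ψ)),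
    sq_nonneg (s * (M 1 0 * Real.cos ψ + M 1 1 * Real.sin ψ))]

lemma jpb_hess_eq_on {v : E2 → ℝ} {U : Set E2} (hU : IsOpen U) (hv : ContDiffOn ℝ 2 v U)
    {x : E2} (hx : x ∈ U) (i j : Fin 2) :
    hess v x i j
      = fderiv ℝ (fderiv ℝ v) x (EuclideanSpace.single i 1) (EuclideanSpace.single j 1) := by
  have hD1 : ContDiffOn ℝ 1 (fderiv ℝ v) U := hv.fderiv_of_isOpen hU (by norm_num)
  have hd1x : DifferentiableAt ℝ (fderiv ℝ v) x :=
    (hD1.differentiableOn one_ne_zero).differentiableAt (hU.mem_nhds hx)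
  have h := hd1x.hasFDerivAt.clm_apply (hasFDerivAt_const (EuclideanSpace.single j 1) x)
  have h2 := h.fderiv
  show pd i (pd j v) x = _
  rw [pd, show pd j v = fun y => fderiv ℝ v y (EuclideanSpace.single j 1) from rfl, h2]
  simp

lemma jpb_hess_continuousOn {v : E2 → ℝ} {U : Set E2} (hU : IsOpen U) (hv : ContDiffOn ℝ 2 v U)
    (i j : Fin 2) : ContinuousOn (fun x => hess v x i j) U := by
  have hD1 : ContDiffOn ℝ 1 (fderiv ℝ v) U := hv.fderiv_of_isOpen hU (by norm_num)
  have hD2 : ContinuousOn (fderiv ℝ (fderiv ℝ v)) U := by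
    have := hD1.fderiv_of_isOpen (m := 0) hU (by norm_num)
    exact this.continuousOn
  have : ContinuousOn (fun x => fderiv ℝ (fderiv ℝ v) x (EuclideanSpace.single i 1)
      (EuclideanSpace.single j 1)) U :=
    (hD2.clm_apply continuousOn_const).clm_apply continuousOn_const
  exact this.congr fun x hx => jpb_hess_eq_on hU hv hx i j

lemma jpb_frob2_hess_continuousOn {v : E2 → ℝ} {U : Set E2} (hU : IsOpen U)
    (hv : ContDiffOn ℝ 2 v U) : ContinuousOn (fun x => frob2 (hess v x)) U := by
  unfold frob2
  refine continuousOn_finset_sum _ fun i _ => continuousOn_finset_sum _ fun j _ => ?_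
  exact (jpb_hess_continuousOn hU hv i j).pow 2

lemma jpb_evnorm_continuousOn {v : E2 → ℝ} {U : Set E2} (hU : IsOpen U)
    (hv : ContDiffOn ℝ 2 v U)
    {X : Type*} [TopologicalSpace X] {φ : X → E2} {w : X → Fin 2 → ℝ} {s : Set X}
    (hφ : ContinuousOn φ s) (hφU : Set.MapsTo φ s U) (hw : ContinuousOn w s) :
    ContinuousOn (fun x => evnorm ((hess v (φ x)).mulVec (w x))) s := by
  unfold evnorm
  apply ContinuousOn.sqrt
  refine continuousOn_finset_sum _ fun i _ => ContinuousOn.pow ?_ 2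
  simp only [Matrix.mulVec, dotProduct, Fin.sum_univ_two]
  apply ContinuousOn.add
  · exact (((jpb_hess_continuousOn hU hv i 0).comp hφ hφU)).mul
      ((continuous_apply 0).comp_continuousOn hw)
  · exact (((jpb_hess_continuousOn hU hv i 1).comp hφ hφU)).mul
      ((continuous_apply 1).comp_continuousOn hw)

lemma jpb_contPhi : Continuous (fun p : ℝ × ℝ => p.1 • vec2 (Real.cos p.2) (Real.sin p.2)) := by
  have h : Continuous
      (fun p : ℝ × ℝ => (![p.1 * Real.cos p.2, p.1 * Real.sin p.2] : Fin 2 → ℝ)) := by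
    refine continuous_pi fun i => ?_
    fin_cases i
    · simpa using (by fun_prop : Continuous fun p : ℝ × ℝ => p.1 * Real.cos p.2)
    · simpa using (by fun_prop : Continuous fun p : ℝ × ℝ => p.1 * Real.sin p.2)
  have : Continuous (fun p : ℝ × ℝ => vec2 (p.1 * Real.cos p.2) (p.1 * Real.sin p.2)) :=
    (EuclideanSpace.equiv (Fin 2) ℝ).symm.continuous.comp h
  simpa [jpb_smul_vec2] using this

lemma jpb_angle_inj {ψ ψ' : ℝ} (h1 : ψ ∈ Set.Ioc (-π) π) (h2 : ψ' ∈ Set.Ioc (-π) π)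
    (hc : Real.cos ψ = Real.cos ψ') (hs : Real.sin ψ = Real.sin ψ') : ψ = ψ' := by
  have e1 := Complex.arg_cos_add_sin_mul_I h1
  have e2 := Complex.arg_cos_add_sin_mul_I h2
  rw [← e1, ← e2]
  congr 2 <;> simp [Complex.ext_iff, Complex.cos_ofReal_re, Complex.sin_ofReal_re, hc, hs]

lemma jpb_mem_Tset_iff {α β ε : ℝ} (hα : α ∈ Set.Ioo 0 (π/2)) (hβ : β ∈ Set.Ioo 0 α)
    (hε : 0 < ε) {p : ℝ × ℝ} (hp : p ∈ polarCoord.target) :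
    (p.1 • vec2 (Real.cos p.2) (Real.sin p.2) ∈ Tset α β ε) ↔
      p ∈ Set.Icc ε 1 ×ˢ Set.Icc (-α + β) (α - β) := by
  have hπ : α - β < π := by
    have := Real.pi_gt_three
    linarith [hα.2, hβ.1, Real.pi_pos]
  rw [polarCoord_target] at hp
  obtain ⟨hp1, hp2⟩ := hp
  simp only [Set.mem_Ioi] at hp1
  simp only [Set.mem_prod, Set.mem_Ioo] at hp2
  constructor
  · rintro ⟨s, ψ, h1, h2, h3, h4, hx⟩
    rw [jpb_smul_vec2, jpb_smul_vec2] at hx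
    have e1 : p.1 * Real.cos p.2 = s * Real.cos ψ := congrArg (fun x : E2 => x 0) hx
    have e2 : p.1 * Real.sin p.2 = s * Real.sin ψ := congrArg (fun x : E2 => x 1) hx
    have hπp := Real.sin_sq_add_cos_sq p.2
    have hπψ := Real.sin_sq_add_cos_sq ψ
    have hsum : (p.1 * Real.cos p.2)^2 + (p.1 * Real.sin p.2)^2
        = (s * Real.cos ψ)^2 + (s * Real.sin ψ)^2 := by rw [e1, e2]
    have hnorm : p.1 ^ 2 = s ^ 2 := by linear_combination hsum - p.1^2 * hπp + s^2 * hπψ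
    have hs0 : 0 < s := lt_of_lt_of_le hε h1
    have hfac : (p.1 - s) * (p.1 + s) = 0 := by linear_combination hnorm
    have hps : p.1 = s := by
      rcases mul_eq_zero.1 hfac with h | h
      · linarith
      · nlinarith
    subst hps
    have hc : Real.cos p.2 = Real.cos ψ := mul_left_cancel₀ (ne_of_gt hp1) e1
    have hsin : Real.sin p.2 = Real.sin ψ := mul_left_cancel₀ (ne_of_gt hp1) e2
    have hψmem : ψ ∈ Set.Ioc (-π) π :=
      ⟨by linarith [hβ.1, hα.2, Real.pi_pos, hπ], by linarith⟩
    have := jpb_angle_inj ⟨hp2.1, le_of_lt hp2.2⟩ hψmem hc hsin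
    subst this
    exact ⟨⟨h1, h2⟩, ⟨h3, h4⟩⟩
  · rintro ⟨h1, h2⟩
    exact ⟨p.1, p.2, h1.1, h1.2, h2.1, h2.2, rfl⟩

lemma jpb_polar_cov {α β ε : ℝ} (hα : α ∈ Set.Ioo 0 (π/2)) (hβ : β ∈ Set.Ioo 0 α) (hε : 0 < ε)
    {U : Set E2} (hTU : Tset α β ε ⊆ U) {g : E2 → ℝ} (hg : ContinuousOn g U) :
    ∫ x in Tset α β ε, g x
      = ∫ s in Set.Ioc ε 1, ∫ ψ in Set.Ioc (-α + β) (α - β),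
          s * g (s • vec2 (Real.cos ψ) (Real.sin ψ)) := by
  set Φ : ℝ × ℝ → E2 := fun p => p.1 • vec2 (Real.cos p.2) (Real.sin p.2) with hΦ
  set R : Set (ℝ × ℝ) := Set.Icc ε 1 ×ˢ Set.Icc (-α + β) (α - β) with hR
  have hTset_eq : Tset α β ε = Φ '' R := by
    ext x
    constructor
    · rintro ⟨s, ψ, h1, h2, h3, h4, hx⟩
      exact ⟨(s, ψ), ⟨⟨h1, h2⟩, ⟨h3, h4⟩⟩, hx.symm⟩
    · rintro ⟨⟨s, ψ⟩, ⟨⟨h1, h2⟩, ⟨h3, h4⟩⟩, hx⟩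
      exact ⟨s, ψ, h1, h2, h3, h4, hx.symm⟩
  have hRcomp : IsCompact R := isCompact_Icc.prod isCompact_Icc
  have hTcomp : IsCompact (Tset α β ε) := by rw [hTset_eq]; exact hRcomp.image jpb_contPhi
  have hTm : MeasurableSet (Tset α β ε) := hTcomp.isClosed.measurableSet
  have hRm : MeasurableSet R := measurableSet_Icc.prod measurableSet_Icc
  have hRsub : R ⊆ polarCoord.target := by
    rw [polarCoord_target, hR]
    refine Set.prod_mono (fun x hx => ?_) (fun x hx => ?_)
    · exact lt_of_lt_of_le hε hx.1
    · have hπ : α - β < π := by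
        have := Real.pi_gt_three; linarith [hα.2, hβ.1]
      exact ⟨by linarith [hx.1, hβ.1, hα.2, Real.pi_pos], lt_of_le_of_lt hx.2 hπ⟩
  have hmaps : Set.MapsTo Φ R U := by
    rintro ⟨s, ψ⟩ ⟨⟨h1, h2⟩, ⟨h3, h4⟩⟩
    exact hTU ⟨s, ψ, h1, h2, h3, h4, rfl⟩
  rw [← integral_indicator hTm]
  have mp : MeasurePreserving
      (((MeasurableEquiv.finTwoArrow (α := ℝ)).symm.trans
        (MeasurableEquiv.toLp 2 (Fin 2 → ℝ)))) volume volume :=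
    ((EuclideanSpace.volume_preserving_symm_measurableEquiv_toLp (Fin 2)).symm _).comp
      ((volume_preserving_finTwoArrow ℝ).symm _)
  have heq : ∀ p : ℝ × ℝ,
      ((MeasurableEquiv.finTwoArrow (α := ℝ)).symm.trans
        (MeasurableEquiv.toLp 2 (Fin 2 → ℝ))) p = vec2 p.1 p.2 := by
    intro p
    ext i
    fin_cases i <;> rfl
  have step2 : ∫ x, (Tset α β ε).indicator g x
      = ∫ p : ℝ × ℝ, (Tset α β ε).indicator g (vec2 p.1 p.2) := by
    rw [← mp.integral_comp (MeasurableEquiv.measurableEmbedding _)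
      ((Tset α β ε).indicator g)]
    exact integral_congr_ae (Filter.Eventually.of_forall fun p => by simp only [heq])
  rw [step2]
  rw [← integral_comp_polarCoord_symm
    (fun p : ℝ × ℝ => (Tset α β ε).indicator g (vec2 p.1 p.2))]
  have step4 : ∫ p in polarCoord.target,
        p.1 • (Tset α β ε).indicator g (vec2 (polarCoord.symm p).1 (polarCoord.symm p).2)
      = ∫ p in polarCoord.target, R.indicator (fun q => q.1 * g (Φ q)) p := by
    refine setIntegral_congr_fun polarCoord.open_target.measurableSet fun p hp => ?_
    have hsymm : vec2 (polarCoord.symm p).1 (polarCoord.symm p).2 = Φ p := by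
      show vec2 (polarCoord.symm p).1 (polarCoord.symm p).2
        = p.1 • vec2 (Real.cos p.2) (Real.sin p.2)
      rw [polarCoord_symm_apply, jpb_smul_vec2]
    rw [hsymm]
    by_cases hmem : p ∈ R
    · rw [Set.indicator_of_mem hmem,
        Set.indicator_of_mem ((jpb_mem_Tset_iff hα hβ hε hp).2 hmem)]
      simp [smul_eq_mul, hΦ]
    · rw [Set.indicator_of_notMem hmem,
        Set.indicator_of_notMem (fun hc => hmem ((jpb_mem_Tset_iff hα hβ hε hp).1 hc))]
      simp
  rw [step4]
  rw [setIntegral_indicator hRm, Set.inter_eq_self_of_subset_right hRsub]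
  have hHcont : ContinuousOn (fun q : ℝ × ℝ => q.1 * g (Φ q)) R :=
    continuous_fst.continuousOn.mul (hg.comp jpb_contPhi.continuousOn hmaps)
  have hHint : IntegrableOn (fun q : ℝ × ℝ => q.1 * g (Φ q)) R :=
    hHcont.integrableOn_compact hRcomp
  rw [hR, MeasureTheory.Measure.volume_eq_prod]
  rw [setIntegral_prod _ (by rw [← MeasureTheory.Measure.volume_eq_prod]; exact hHint)]
  rw [integral_Icc_eq_integral_Ioc]
  refine setIntegral_congr_fun measurableSet_Ioc fun s _ => ?_
  rw [integral_Icc_eq_integral_Ioc]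

end JPBAux

/-- **Jensen estimate for the bending energy in polar coordinates**: for `v` of class `C²` on a
neighborhood of `T`,
`∫_T |∇²v|² dx ≥ (1/(2α)) ∫_ε^1 s⁻¹ (∫_{−α+β}^{α−β} |∂_ψ (∇v(s e_ψ))| dψ)² ds`,
where `∂_ψ(∇v(s e_ψ)) = ∇²v(s e_ψ)·(s e_ψ^⊥)`. -/
theorem jensen_polar_bending (α β ε : ℝ) (hα : α ∈ Set.Ioo 0 (π / 2))
    (hβ : β ∈ Set.Ioo 0 α) (hε : 0 < ε) (hε1 : ε < 1)
    (v : E2 → ℝ) (U : Set E2) (hU : IsOpen U) (hTU : Tset α β ε ⊆ U)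
    (hv : ContDiffOn ℝ 2 v U) :
    (1 / (2 * α)) * ∫ s in ε..(1:ℝ), s⁻¹ *
        (∫ ψ in (-α + β)..(α - β),
          evnorm ((hess v (s • vec2 (Real.cos ψ) (Real.sin ψ))).mulVec
            (s • ![-(Real.sin ψ), Real.cos ψ]))) ^ 2
      ≤ ∫ x in Tset α β ε, frob2 (hess v x) := by
  have hα0 : 0 < α := hα.1
  have hβ0 : 0 < β := hβ.1
  have hβα : β < α := hβ.2
  set a₀ : ℝ := -α + β with ha₀
  set b₀ : ℝ := α - β with hb₀
  have hab : a₀ ≤ b₀ := by rw [ha₀, hb₀]; linarith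
  set Φ : ℝ × ℝ → E2 := fun p => p.1 • vec2 (Real.cos p.2) (Real.sin p.2) with hΦ
  set g : E2 → ℝ := fun x => frob2 (hess v x) with hgdef
  set G : ℝ × ℝ → ℝ :=
    fun p => evnorm ((hess v (Φ p)).mulVec (p.1 • ![-(Real.sin p.2), Real.cos p.2])) with hGdef
  set R : Set (ℝ × ℝ) := Set.Icc ε 1 ×ˢ Set.Icc a₀ b₀ with hRdef
  have hgc : ContinuousOn g U := jpb_frob2_hess_continuousOn hU hv
  have hmaps : Set.MapsTo Φ R U := by
    rintro ⟨s, ψ⟩ ⟨⟨h1, h2⟩, ⟨h3, h4⟩⟩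
    exact hTU ⟨s, ψ, h1, h2, h3, h4, rfl⟩
  have hRcomp : IsCompact R := isCompact_Icc.prod isCompact_Icc
  have hGcont : ContinuousOn G R := by
    apply jpb_evnorm_continuousOn hU hv jpb_contPhi.continuousOn hmaps
    exact (continuous_fst.smul (continuous_pi fun i => by
      fin_cases i
      · simpa using (by fun_prop : Continuous fun p : ℝ × ℝ => -Real.sin p.2)
      · simpa using (by fun_prop : Continuous fun p : ℝ × ℝ => Real.cos p.2))).continuousOn
  set J : ℝ → ℝ := fun s => ∫ ψ in Set.Ioc a₀ b₀, G (s, ψ) with hJdef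
  have hgoal_lhs : (∫ s in ε..(1:ℝ), s⁻¹ *
        (∫ ψ in a₀..b₀, evnorm ((hess v (s • vec2 (Real.cos ψ) (Real.sin ψ))).mulVec
            (s • ![-(Real.sin ψ), Real.cos ψ]))) ^ 2)
      = ∫ s in Set.Ioc ε 1, s⁻¹ * (J s) ^ 2 := by
    rw [intervalIntegral.integral_of_le hε1.le]
    refine setIntegral_congr_fun measurableSet_Ioc fun s _ => ?_
    rw [intervalIntegral.integral_of_le hab]
  have hgΦ : ContinuousOn (fun q : ℝ × ℝ => g (Φ q)) R :=
    hgc.comp jpb_contPhi.continuousOn hmaps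
  have hgc' : ContinuousOn (fun q : ℝ × ℝ => q.1 * g (Φ q)) R :=
    continuous_fst.continuousOn.mul hgΦ
  have hsub : Set.Ioc ε 1 ×ˢ Set.Ioc a₀ b₀ ⊆ R :=
    Set.prod_mono Set.Ioc_subset_Icc_self Set.Ioc_subset_Icc_self
  have hRIoc : IntegrableOn (fun q : ℝ × ℝ => q.1 * g (Φ q))
      (Set.Ioc ε 1 ×ˢ Set.Ioc a₀ b₀) :=
    (hgc'.integrableOn_compact hRcomp).mono_set hsub
  have hGIoc : IntegrableOn G (Set.Ioc ε 1 ×ˢ Set.Ioc a₀ b₀) :=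
    (hGcont.integrableOn_compact hRcomp).mono_set hsub
  have hprodK : Integrable (fun q : ℝ × ℝ => q.1 * g (Φ q))
      ((volume.restrict (Set.Ioc ε 1)).prod (volume.restrict (Set.Ioc a₀ b₀))) := by
    rw [Measure.prod_restrict, ← Measure.volume_eq_prod]; exact hRIoc
  have hprodG : Integrable G
      ((volume.restrict (Set.Ioc ε 1)).prod (volume.restrict (Set.Ioc a₀ b₀))) := by
    rw [Measure.prod_restrict, ← Measure.volume_eq_prod]; exact hGIoc
  have hK_int : Integrable (fun s => ∫ ψ in Set.Ioc a₀ b₀, s * g (Φ (s, ψ)))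
      (volume.restrict (Set.Ioc ε 1)) := hprodK.integral_prod_left
  have hJ_int : Integrable J (volume.restrict (Set.Ioc ε 1)) := hprodG.integral_prod_left
  have hJm : AEStronglyMeasurable J (volume.restrict (Set.Ioc ε 1)) :=
    hJ_int.aestronglyMeasurable
  obtain ⟨C, hC⟩ := hRcomp.exists_bound_of_continuousOn hGcont
  set C₀ : ℝ := max C 0 with hC₀def
  have hC₀0 : 0 ≤ C₀ := le_max_right _ _
  have hC₀ : ∀ p ∈ R, ‖G p‖ ≤ C₀ := fun p hp => (hC p hp).trans (le_max_left _ _)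
  have hJbound : ∀ s ∈ Set.Ioc ε 1, |J s| ≤ C₀ * (b₀ - a₀) := by
    intro s hs
    have hsIcc : s ∈ Set.Icc ε 1 := ⟨hs.1.le, hs.2⟩
    have h := norm_setIntegral_le_of_norm_le_const (μ := volume)
      (s := Set.Ioc a₀ b₀) (f := fun ψ => G (s, ψ)) (C := C₀)
      (by rw [Real.volume_Ioc]; exact ENNReal.ofReal_lt_top)
      (fun ψ hψ => hC₀ (s, ψ) ⟨hsIcc, Set.Ioc_subset_Icc_self hψ⟩)
    rw [Measure.real, Real.volume_Ioc, ENNReal.toReal_ofReal (by linarith)] at h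
    exact h
  have hLHS_int : Integrable (fun s => s⁻¹ * (J s) ^ 2)
      (volume.restrict (Set.Ioc ε 1)) := by
    have hasm : AEStronglyMeasurable (fun s => s⁻¹ * (J s) ^ 2)
        (volume.restrict (Set.Ioc ε 1)) := by
      have : AEStronglyMeasurable (fun s : ℝ => s⁻¹) (volume.restrict (Set.Ioc ε 1)) :=
        (measurable_inv).aestronglyMeasurable
      have h2 : AEStronglyMeasurable (fun s => (J s) ^ 2)
          (volume.restrict (Set.Ioc ε 1)) := by
        have := hJm.mul hJm
        refine this.congr (Filter.Eventually.of_forall fun s => ?_)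
        simp [sq]
      exact this.mul h2
    refine Integrable.mono' (integrable_const (ε⁻¹ * (C₀ * (b₀ - a₀)) ^ 2)) hasm ?_
    rw [ae_restrict_iff' measurableSet_Ioc]
    refine Filter.Eventually.of_forall fun s hs => ?_
    have hs0 : 0 < s := hε.trans hs.1
    have hsinv : s⁻¹ ≤ ε⁻¹ := by
      apply inv_anti₀ hε hs.1.le
    have hJb := hJbound s hs
    have habs : ‖s⁻¹ * (J s) ^ 2‖ = s⁻¹ * |J s| ^ 2 := by
      rw [norm_mul, norm_pow, Real.norm_eq_abs, Real.norm_eq_abs,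
        abs_of_nonneg (inv_nonneg.2 hs0.le)]
    rw [habs]
    have h1 : |J s| ^ 2 ≤ (C₀ * (b₀ - a₀)) ^ 2 :=
      pow_le_pow_left₀ (abs_nonneg _) hJb 2
    have h2 : s⁻¹ * |J s| ^ 2 ≤ ε⁻¹ * (C₀ * (b₀ - a₀)) ^ 2 := by
      apply mul_le_mul hsinv h1 (by positivity) (by positivity)
    exact h2
  have hpt : ∀ s ∈ Set.Ioc ε 1,
      s⁻¹ * (J s) ^ 2 ≤ 2 * α * ∫ ψ in Set.Ioc a₀ b₀, s * g (Φ (s, ψ)) := by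
    intro s hs
    have hs0 : 0 < s := hε.trans hs.1
    have hsIcc : s ∈ Set.Icc ε 1 := ⟨hs.1.le, hs.2⟩
    have hslice : Set.MapsTo (fun ψ : ℝ => ((s : ℝ), ψ)) (Set.Icc a₀ b₀) R :=
      fun ψ hψ => ⟨hsIcc, hψ⟩
    have hGs : ContinuousOn (fun ψ => G (s, ψ)) (Set.Icc a₀ b₀) :=
      hGcont.comp (Continuous.continuousOn (by fun_prop)) hslice
    have hgs : ContinuousOn (fun ψ => g (Φ (s, ψ))) (Set.Icc a₀ b₀) :=
      hgΦ.comp (Continuous.continuousOn (by fun_prop)) hslice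
    have hcs := jpb_cs_Ioc hab hGs (fun ψ _ => jpb_evnorm_nonneg _)
    have hint1 : IntegrableOn (fun ψ => (G (s, ψ)) ^ 2) (Set.Ioc a₀ b₀) :=
      ((hGs.pow 2).integrableOn_Icc).mono_set Set.Ioc_subset_Icc_self
    have hint2 : IntegrableOn (fun ψ => s ^ 2 * g (Φ (s, ψ))) (Set.Ioc a₀ b₀) :=
      ((continuousOn_const.mul hgs).integrableOn_Icc).mono_set Set.Ioc_subset_Icc_self
    have hmono : (∫ ψ in Set.Ioc a₀ b₀, (G (s, ψ)) ^ 2)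
        ≤ ∫ ψ in Set.Ioc a₀ b₀, s ^ 2 * g (Φ (s, ψ)) :=
      setIntegral_mono_on hint1 hint2 measurableSet_Ioc
        (fun ψ _ => jpb_evnorm_sq_le _ _ hs0.le)
    have hpull : (∫ ψ in Set.Ioc a₀ b₀, s ^ 2 * g (Φ (s, ψ)))
        = s ^ 2 * ∫ ψ in Set.Ioc a₀ b₀, g (Φ (s, ψ)) := integral_const_mul _ _
    have hpull2 : (∫ ψ in Set.Ioc a₀ b₀, s * g (Φ (s, ψ)))
        = s * ∫ ψ in Set.Ioc a₀ b₀, g (Φ (s, ψ)) := integral_const_mul _ _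
    have Ig0 : 0 ≤ ∫ ψ in Set.Ioc a₀ b₀, g (Φ (s, ψ)) :=
      setIntegral_nonneg measurableSet_Ioc (fun ψ _ => jpb_frob2_nonneg _)
    set Ig : ℝ := ∫ ψ in Set.Ioc a₀ b₀, g (Φ (s, ψ)) with hIg
    calc s⁻¹ * (J s) ^ 2
        ≤ s⁻¹ * ((b₀ - a₀) * (s ^ 2 * Ig)) := by
          apply mul_le_mul_of_nonneg_left _ (inv_nonneg.2 hs0.le)
          calc (J s) ^ 2 ≤ (b₀ - a₀) * ∫ ψ in Set.Ioc a₀ b₀, (G (s, ψ)) ^ 2 := hcs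
            _ ≤ (b₀ - a₀) * (s ^ 2 * Ig) := by
                rw [← hpull]
                exact mul_le_mul_of_nonneg_left hmono (by linarith)
      _ = (b₀ - a₀) * (s * Ig) := by
          field_simp
      _ ≤ 2 * α * (s * Ig) := by
          apply mul_le_mul_of_nonneg_right _ (by positivity)
          rw [hb₀, ha₀]; linarith
      _ = 2 * α * ∫ ψ in Set.Ioc a₀ b₀, s * g (Φ (s, ψ)) := by rw [hpull2]
  have hcov := jpb_polar_cov hα hβ hε hTU hgc
  rw [hgoal_lhs]
  rw [show (∫ x in Tset α β ε, frob2 (hess v x)) = ∫ x in Tset α β ε, g x from rfl, hcov]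
  have hstep : (∫ s in Set.Ioc ε 1, s⁻¹ * (J s) ^ 2)
      ≤ ∫ s in Set.Ioc ε 1, 2 * α * ∫ ψ in Set.Ioc a₀ b₀, s * g (Φ (s, ψ)) :=
    setIntegral_mono_on hLHS_int (hK_int.const_mul (2 * α)) measurableSet_Ioc hpt
  have hstep2 : (∫ s in Set.Ioc ε 1, 2 * α * ∫ ψ in Set.Ioc a₀ b₀, s * g (Φ (s, ψ)))
      = 2 * α * ∫ s in Set.Ioc ε 1, ∫ ψ in Set.Ioc a₀ b₀, s * g (Φ (s, ψ)) :=
    integral_const_mul _ _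
  have hfin : (1 / (2 * α)) * (∫ s in Set.Ioc ε 1, s⁻¹ * (J s) ^ 2)
      ≤ (1 / (2 * α)) * (2 * α * ∫ s in Set.Ioc ε 1,
          ∫ ψ in Set.Ioc a₀ b₀, s * g (Φ (s, ψ))) := by
    apply mul_le_mul_of_nonneg_left _ (by positivity)
    rw [← hstep2]; exact hstep
  calc (1 / (2 * α)) * (∫ s in Set.Ioc ε 1, s⁻¹ * (J s) ^ 2)
      ≤ (1 / (2 * α)) * (2 * α * ∫ s in Set.Ioc ε 1,
          ∫ ψ in Set.Ioc a₀ b₀, s * g (Φ (s, ψ))) := hfin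
    _ = ∫ s in Set.Ioc ε 1, ∫ ψ in Set.Ioc a₀ b₀, s * g (Φ (s, ψ)) := by
        field_simp
end
end
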